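/- Let A be a commutative, semisimple, Tauberian Banach algebra with discrete character space and a bounded approximate identity. If A is amenable then A is biprojective. -/

import Mathlib

open Filter Topology NormedSpace

/-- A Banach `A`-bimodule: completely determined by bounded left/right actions. -/
structure BBimod (A : Type) [NonUnitalNormedRing A] [NormedSpace ℂ A]
    (E : Type) [NormedAddCommGroup E] [NormedSpace ℂ E] where
  l : A →L[ℂ] E →L[ℂ] E
  r : A →L[ℂ] E →L[ℂ] E
  l_mul : ∀ a b x, l (a * b) x = l a (l b x)
  r_mul : ∀ a b x, r (a * b) x = r b (r a x)
  lr : ∀ a b x, l a (r b x) = r b (l a x)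

variable {A : Type} [NonUnitalNormedRing A] [NormedSpace ℂ A]
variable {E : Type} [NormedAddCommGroup E] [NormedSpace ℂ E]

/-- `D` is a derivation from `A` into the dual bimodule `E⋆` of `E`:
`D(ab) = a·D(b) + D(a)·b`, where `(a·φ)(x) = φ(x·a)` and `(φ·a)(x) = φ(a·x)`. -/
def BBimod.IsDualDerivation (M : BBimod A E) (D : A →L[ℂ] StrongDual ℂ E) : Prop :=
  ∀ a b x, D (a * b) x = D a (M.l b x) + D b (M.r a x)

/-- `D` is inner: `D a = a·φ - φ·a` for some `φ ∈ E⋆`. -/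
def BBimod.IsInner (M : BBimod A E) (D : A →L[ℂ] StrongDual ℂ E) : Prop :=
  ∃ φ : StrongDual ℂ E, ∀ a x, D a x = φ (M.r a x) - φ (M.l a x)

/-- `E` is pseudo-unital: `E = {a · x · b : a, b ∈ A, x ∈ E}`. -/
def BBimod.PseudoUnital (M : BBimod A E) : Prop :=
  ∀ x : E, ∃ a b y, x = M.l a (M.r b y)

/-- `A` is amenable: every bounded derivation into a dual Banach bimodule is inner. -/
def Amenable (A : Type) [NonUnitalNormedRing A] [NormedSpace ℂ A] : Prop :=
  ∀ (E : Type) [NormedAddCommGroup E] [NormedSpace ℂ E] [CompleteSpace E]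
    (M : BBimod A E) (D : A →L[ℂ] StrongDual ℂ E),
    M.IsDualDerivation D → M.IsInner D

/-- `A` has a bounded approximate identity. -/
def BAI (A : Type) [NonUnitalNormedRing A] : Prop :=
  ∃ (ι : Type) (F : Filter ι) (e : ι → A), F.NeBot ∧ (∃ C, ∀ i, ‖e i‖ ≤ C) ∧
    ∀ a : A, Tendsto (fun i => e i * a) F (𝓝 a) ∧ Tendsto (fun i => a * e i) F (𝓝 a)

/-- `(X, t)` is the projective tensor product `E ⊗̂ F` of Banach spaces: `t` is a contractive
bilinear map with dense span satisfying the universal property for bounded bilinear maps. -/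
structure IsProjTensor (E F X : Type) [NormedAddCommGroup E] [NormedSpace ℂ E]
    [NormedAddCommGroup F] [NormedSpace ℂ F] [NormedAddCommGroup X] [NormedSpace ℂ X]
    (t : E →L[ℂ] F →L[ℂ] X) : Prop where
  span_dense : Dense ((Submodule.span ℂ {z : X | ∃ e f, t e f = z} : Submodule ℂ X) : Set X)
  norm_le : ∀ e f, ‖t e f‖ ≤ ‖e‖ * ‖f‖
  lift : ∀ (Y : Type) [NormedAddCommGroup Y] [NormedSpace ℂ Y] [CompleteSpace Y]
    (b : E →L[ℂ] F →L[ℂ] Y), ∃ T : X →L[ℂ] Y, ‖T‖ ≤ ‖b‖ ∧ ∀ e f, T (t e f) = b e f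

section Statement4Aux

open WeakDual WeakDual.CharacterSpace

set_option linter.unusedSectionVars false

section PartA

variable {B : Type} [NonUnitalNormedCommRing B] [NormedSpace ℂ B]
    [IsScalarTower ℂ B B] [SMulCommClass ℂ B B]

lemma st4_supp_finite [DiscreteTopology (characterSpace ℂ B)] (a : B)
    (h : HasCompactSupport fun φ : characterSpace ℂ B => φ a) :
    {ψ : characterSpace ℂ B | ψ a ≠ 0}.Finite :=
  h.finite_of_discrete.subset (subset_tsupport _)

lemma st4_char_exists_ne (φ ψ : characterSpace ℂ B) (h : φ ≠ ψ) : ∃ c : B, φ c ≠ ψ c := by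
  by_contra hc
  push_neg at hc
  exact h (CharacterSpace.ext hc)

lemma st4_exists_finsupp_one [DiscreteTopology (characterSpace ℂ B)]
    (htaub : Dense {a : B | HasCompactSupport fun φ : characterSpace ℂ B => φ a})
    (φ : characterSpace ℂ B) :
    ∃ a : B, {ψ : characterSpace ℂ B | ψ a ≠ 0}.Finite ∧ φ a = 1 := by
  obtain ⟨b, hb⟩ : ∃ b : B, φ b ≠ 0 := by
    by_contra hb
    push_neg at hb
    refine φ.prop.1 (DFunLike.ext _ _ fun x => ?_)
    rw [CharacterSpace.coe_coe]
    exact hb x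
  have hbn : 0 < ‖φ b‖ := by simpa using hb
  have hφpos : 0 < ‖toCLM φ‖ := by
    rcases le_or_gt ‖toCLM φ‖ 0 with h | h
    · exfalso
      have := (toCLM φ).le_opNorm b
      simp only [coe_toCLM] at this
      nlinarith [norm_nonneg b]
    · exact h
  have hε : 0 < ‖φ b‖ / (‖toCLM φ‖ + 1) := by positivity
  obtain ⟨a', ha', hd⟩ := Metric.mem_closure_iff.mp (htaub b) _ hε
  have hfa' : {ψ : characterSpace ℂ B | ψ a' ≠ 0}.Finite := st4_supp_finite a' ha'
  have hna' : φ a' ≠ 0 := by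
    intro h0
    have h1 : ‖φ b‖ = ‖toCLM φ (b - a')‖ := by simp [map_sub, h0]
    have h2 : ‖toCLM φ (b - a')‖ ≤ ‖toCLM φ‖ * dist b a' := by
      simpa [dist_eq_norm] using (toCLM φ).le_opNorm (b - a')
    have h4 : ‖toCLM φ‖ * dist b a' < ‖toCLM φ‖ * (‖φ b‖ / (‖toCLM φ‖ + 1)) :=
      mul_lt_mul_of_pos_left hd hφpos
    have h5 : ‖toCLM φ‖ * (‖φ b‖ / (‖toCLM φ‖ + 1)) < ‖φ b‖ := by
      rw [mul_div_assoc', div_lt_iff₀ (by positivity)]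
      nlinarith
    linarith
  refine ⟨(φ a')⁻¹ • a', ?_, ?_⟩
  · apply hfa'.subset
    intro ψ hψ
    simp only [Set.mem_setOf_eq, map_smul, smul_eq_mul] at hψ ⊢
    exact fun h => hψ (by simp [h])
  · simp [map_smul, inv_mul_cancel₀ hna']

lemma st4_exists_idem_aux :
    ∀ (n : ℕ) (φ : characterSpace ℂ B) (a : B)
      (hfin : {ψ : characterSpace ℂ B | ψ a ≠ 0}.Finite),
      hfin.toFinset.card ≤ n → φ a = 1 →
      ∃ u : B, φ u = 1 ∧ ∀ ψ : characterSpace ℂ B, ψ ≠ φ → ψ u = 0 := by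
  intro n
  induction n with
  | zero =>
    intro φ a hfin hcard hφ
    exfalso
    have : φ ∈ hfin.toFinset := by simp [hφ]
    have := Finset.card_pos.mpr ⟨φ, this⟩
    omega
  | succ n ih =>
    intro φ a hfin hcard hφ
    classical
    by_cases hall : ∀ ψ : characterSpace ℂ B, ψ ≠ φ → ψ a = 0
    · exact ⟨a, hφ, hall⟩
    · push_neg at hall
      obtain ⟨ψ₀, hψ₀ne, hψ₀⟩ := hall
      obtain ⟨c, hc⟩ := st4_char_exists_ne φ ψ₀ (Ne.symm hψ₀ne)
      have hsub : φ c - ψ₀ c ≠ 0 := sub_ne_zero.mpr hc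
      set a' : B := (φ c - ψ₀ c)⁻¹ • (a * c - ψ₀ c • a) with ha'
      have hval : ∀ ψ : characterSpace ℂ B,
          ψ a' = (φ c - ψ₀ c)⁻¹ * (ψ a * (ψ c - ψ₀ c)) := by
        intro ψ
        have h1 : ψ a' = (φ c - ψ₀ c)⁻¹ * (ψ a * ψ c - ψ₀ c * ψ a) := by
          simp [ha', map_smul, map_sub, map_mul, smul_eq_mul]
        rw [h1]; ring
      have hφa' : φ a' = 1 := by
        rw [hval, hφ]
        field_simp
      have hsupp : {ψ : characterSpace ℂ B | ψ a' ≠ 0} ⊆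
          {ψ : characterSpace ℂ B | ψ a ≠ 0} \ {ψ₀} := by
        intro ψ hψ
        simp only [Set.mem_setOf_eq] at hψ
        constructor
        · intro h0
          exact hψ (by rw [hval, h0]; ring)
        · intro h0
          rw [Set.mem_singleton_iff] at h0
          subst h0
          exact hψ (by rw [hval]; simp)
      have hfin' : {ψ : characterSpace ℂ B | ψ a' ≠ 0}.Finite :=
        hfin.diff.subset hsupp
      have hcard' : hfin'.toFinset.card ≤ n := by
        have h1 : hfin'.toFinset ⊆ hfin.toFinset.erase ψ₀ := by
          intro ψ hψ
          simp only [Set.Finite.mem_toFinset] at hψ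
          have := hsupp hψ
          simp only [Set.mem_diff, Set.mem_setOf_eq, Set.mem_singleton_iff] at this
          simp [Finset.mem_erase, this.2, this.1]
        have h2 := Finset.card_le_card h1
        have h3 : ψ₀ ∈ hfin.toFinset := by simp [hψ₀]
        rw [Finset.card_erase_of_mem h3] at h2
        omega
      exact ih φ a' hfin' hcard' hφa'

lemma st4_exists_idem [DiscreteTopology (characterSpace ℂ B)]
    (htaub : Dense {a : B | HasCompactSupport fun φ : characterSpace ℂ B => φ a})
    (φ : characterSpace ℂ B) :
    ∃ u : B, φ u = 1 ∧ ∀ ψ : characterSpace ℂ B, ψ ≠ φ → ψ u = 0 := by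
  obtain ⟨a, hfin, hφ⟩ := st4_exists_finsupp_one htaub φ
  exact st4_exists_idem_aux hfin.toFinset.card φ a hfin le_rfl hφ

end PartA

section QLift

variable {M N : Type} [NormedAddCommGroup M] [NormedSpace ℂ M]
  [NormedAddCommGroup N] [NormedSpace ℂ N]

/-- Lift of a continuous linear map vanishing on a submodule to the quotient. -/
noncomputable def qlift (S : Submodule ℂ M) (T : M →L[ℂ] N) (h : ∀ x ∈ S, T x = 0) :
    (M ⧸ S) →L[ℂ] N :=
  LinearMap.mkContinuous (S.liftQ (T : M →ₗ[ℂ] N) (fun x hx => by simpa using h x hx)) ‖T‖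
    (by
      intro y
      refine le_of_forall_pos_le_add fun ε hε => ?_
      have hε' : 0 < ε / (‖T‖ + 1) := by positivity
      obtain ⟨m, rfl, hm⟩ := Submodule.Quotient.norm_mk_lt y hε'
      rw [Submodule.liftQ_apply]
      have h1 : ‖T m‖ ≤ ‖T‖ * ‖m‖ := T.le_opNorm m
      have h2 : ‖T‖ * ‖m‖ ≤ ‖T‖ * (‖(Submodule.Quotient.mk m : M ⧸ S)‖ + ε / (‖T‖ + 1)) :=
        mul_le_mul_of_nonneg_left (le_of_lt hm) (norm_nonneg T)
      have h3 : ‖T‖ * (ε / (‖T‖ + 1)) ≤ ε := by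
        rw [mul_div_assoc']
        rw [div_le_iff₀ (by positivity)]
        nlinarith [norm_nonneg T, le_of_lt hε]
      calc ‖T m‖ ≤ ‖T‖ * ‖m‖ := h1
        _ ≤ ‖T‖ * ‖(Submodule.Quotient.mk m : M ⧸ S)‖ + ‖T‖ * (ε / (‖T‖ + 1)) := by
            rw [← mul_add]; exact h2
        _ ≤ ‖T‖ * ‖(Submodule.Quotient.mk m : M ⧸ S)‖ + ε := by linarith)

@[simp] lemma qlift_mk (S : Submodule ℂ M) (T : M →L[ℂ] N) (h : ∀ x ∈ S, T x = 0) (ξ : M) :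
    qlift S T h (Submodule.Quotient.mk ξ) = T ξ := rfl

lemma norm_qlift_le (S : Submodule ℂ M) (T : M →L[ℂ] N) (h : ∀ x ∈ S, T x = 0) :
    ‖qlift S T h‖ ≤ ‖T‖ :=
  LinearMap.mkContinuous_norm_le _ (norm_nonneg T) _

end QLift

section PartB

variable {B : Type} [NonUnitalNormedCommRing B] [NormedSpace ℂ B]
    [IsScalarTower ℂ B B] [SMulCommClass ℂ B B]
    {X : Type} [NormedAddCommGroup X] [NormedSpace ℂ X]

lemma st4_tensor_ext (t : B →L[ℂ] B →L[ℂ] X) (ht : IsProjTensor B B X t)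
    {Y : Type} [NormedAddCommGroup Y] [NormedSpace ℂ Y]
    (f g : X →L[ℂ] Y) (h : ∀ x y, f (t x y) = g (t x y)) : f = g := by
  have hs : Set.EqOn f g {z : X | ∃ e f, t e f = z} := by
    rintro z ⟨x, y, rfl⟩
    exact h x y
  have hspan : Set.EqOn f g (Submodule.span ℂ {z : X | ∃ e f, t e f = z} : Set X) :=
    LinearMap.eqOn_span' (f := (f : X →ₗ[ℂ] Y)) (g := (g : X →ₗ[ℂ] Y)) hs
  have hclo := hspan.closure f.continuous g.continuous
  ext z
  exact hclo (by rw [ht.span_dense.closure_eq]; trivial)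

end PartB

end Statement4Aux

set_option maxHeartbeats 4000000 in
set_option synthInstance.maxHeartbeats 1000000 in
open WeakDual in
theorem statement4 (A : Type) [NonUnitalNormedCommRing A] [NormedSpace ℂ A]
    [IsScalarTower ℂ A A] [SMulCommClass ℂ A A] [CompleteSpace A]
    (hss : ∀ a : A, (∀ φ : characterSpace ℂ A, φ a = 0) → a = 0)
    (hdisc : DiscreteTopology (characterSpace ℂ A))
    (htaub : Dense {a : A | HasCompactSupport fun φ : characterSpace ℂ A => φ a})
    (hbai : BAI A) (ham : Amenable A)
    (X : Type) [NormedAddCommGroup X] [NormedSpace ℂ X] [CompleteSpace X]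
    (t : A →L[ℂ] A →L[ℂ] X) (ht : IsProjTensor A A X t)
    (l r : A →L[ℂ] X →L[ℂ] X)
    (hlt : ∀ a x y, l a (t x y) = t (a * x) y)
    (hrt : ∀ a x y, r a (t x y) = t x (y * a))
    (Δ : X →L[ℂ] A) (hΔ : ∀ a b, Δ (t a b) = a * b) :
    -- biprojectivity: `Δ` has a bounded right inverse which is an `A`-bimodule homomorphism
    ∃ ρ : A →L[ℂ] X, (∀ a, Δ (ρ a) = a) ∧
      (∀ a b, ρ (a * b) = l a (ρ b)) ∧ (∀ a b, ρ (a * b) = r b (ρ a)) := by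
  classical
  letI : NormedAddCommGroup (StrongDual ℂ (StrongDual ℂ X)) := ContinuousLinearMap.toNormedAddCommGroup
  letI : NormedSpace ℂ (StrongDual ℂ (StrongDual ℂ X)) := ContinuousLinearMap.toNormedSpace
  -- Part A: minimal idempotents
  choose u hu1 hu2 using st4_exists_idem (B := A) htaub
  have hu_mul : ∀ (φ : characterSpace ℂ A) (b : A), u φ * b = φ b • u φ := by
    intro φ b
    refine sub_eq_zero.mp (hss _ fun ψ => ?_)
    by_cases hψ : ψ = φ
    · subst hψ
      simp [map_mul, map_smul, hu1, smul_eq_mul, mul_comm]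
    · simp [map_mul, map_smul, hu2 φ ψ hψ, smul_eq_mul]
  have hu_sq : ∀ φ, u φ * u φ = u φ := fun φ => by
    rw [hu_mul φ (u φ), hu1, one_smul]
  have hu_orth : ∀ φ ψ : characterSpace ℂ A, φ ≠ ψ → u φ * u ψ = 0 := fun φ ψ h => by
    rw [hu_mul φ (u ψ), hu2 ψ φ h, zero_smul]
  have hdecomp : ∀ (a : A) (hfin : {ψ : characterSpace ℂ A | ψ a ≠ 0}.Finite),
      a = ∑ φ ∈ hfin.toFinset, φ a • u φ := by
    intro a hfin
    refine sub_eq_zero.mp (hss _ fun ψ => ?_)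
    rw [map_sub, map_sum]
    by_cases hmem : ψ ∈ hfin.toFinset
    · rw [Finset.sum_eq_single_of_mem ψ hmem (fun φ _ hne => by
        simp [map_smul, hu2 φ ψ hne.symm, smul_eq_mul])]
      simp [map_smul, hu1, smul_eq_mul]
    · have hψ0 : ψ a = 0 := by
        by_contra h0
        exact hmem (by simp [h0])
      rw [Finset.sum_eq_zero (fun φ hφ => by
        have hne : ψ ≠ φ := fun h => hmem (h ▸ hφ)
        simp [map_smul, hu2 φ ψ hne, smul_eq_mul])]
      simp [hψ0]
  have hT'dense : Dense {a : A | {ψ : characterSpace ℂ A | ψ a ≠ 0}.Finite} :=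
    Dense.mono (fun a ha => st4_supp_finite a ha) htaub
  -- Part B: algebra of l, r, Δ
  have hlcomp : ∀ a b : A, l (a * b) = (l a).comp (l b) := fun a b =>
    st4_tensor_ext t ht _ _ (fun x y => by
      simp [hlt, ContinuousLinearMap.comp_apply, mul_assoc])
  have hrcomp : ∀ a b : A, r (a * b) = (r b).comp (r a) := fun a b =>
    st4_tensor_ext t ht _ _ (fun x y => by
      simp [hrt, ContinuousLinearMap.comp_apply, mul_assoc])
  have hlr : ∀ a b : A, (l a).comp (r b) = (r b).comp (l a) := fun a b =>
    st4_tensor_ext t ht _ _ (fun x y => by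
      simp [hlt, hrt, ContinuousLinearMap.comp_apply])
  have hΔl : ∀ a : A, Δ.comp (l a) = (ContinuousLinearMap.mul ℂ A a).comp Δ := fun a =>
    st4_tensor_ext t ht _ _ (fun x y => by
      simp [hlt, hΔ, ContinuousLinearMap.comp_apply, mul_assoc])
  have hΔr : ∀ a : A, Δ.comp (r a) = (ContinuousLinearMap.mul ℂ A a).comp Δ := fun a =>
    st4_tensor_ext t ht _ _ (fun x y => by
      simp only [hrt, hΔ, ContinuousLinearMap.comp_apply, ContinuousLinearMap.mul_apply']
      rw [← mul_assoc, mul_comm])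
  -- BAI and the ultrafilter limit functional N
  obtain ⟨ι, F, e, hFne, ⟨C, hC⟩, hlim⟩ := hbai
  haveI := hFne
  obtain ⟨U, hU⟩ := Filter.exists_ultrafilter_le F
  have hwbound : ∀ (ξ : StrongDual ℂ X) (i : ι), ‖ξ (t (e i) (e i))‖ ≤ ‖ξ‖ * (C * C) := by
    intro ξ i
    calc ‖ξ (t (e i) (e i))‖ ≤ ‖ξ‖ * ‖t (e i) (e i)‖ := ξ.le_opNorm _
      _ ≤ ‖ξ‖ * (C * C) := by
          have h1 := ht.norm_le (e i) (e i)
          have h2 : ‖e i‖ * ‖e i‖ ≤ C * C :=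
            mul_le_mul (hC i) (hC i) (norm_nonneg _) ((norm_nonneg _).trans (hC i))
          exact mul_le_mul_of_nonneg_left (h1.trans h2) (norm_nonneg ξ)
  have hNex : ∀ ξ : StrongDual ℂ X, ∃ z : ℂ,
      Tendsto (fun i => ξ (t (e i) (e i))) (U : Filter ι) (𝓝 z) := by
    intro ξ
    have hcpt : IsCompact (Metric.closedBall (0:ℂ) (‖ξ‖ * (C*C))) :=
      isCompact_closedBall _ _
    have hle : (Ultrafilter.map (fun i => ξ (t (e i) (e i))) U : Filter ℂ) ≤
        𝓟 (Metric.closedBall 0 (‖ξ‖*(C*C))) := by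
      rw [Filter.le_principal_iff]
      refine Filter.mem_map.mpr (Filter.univ_mem' fun i => ?_)
      simpa [Metric.mem_closedBall, dist_zero_right] using hwbound ξ i
    obtain ⟨z, _, hz⟩ := hcpt.ultrafilter_le_nhds _ hle
    exact ⟨z, hz⟩
  choose Nf hNf using hNex
  have hNadd : ∀ ξ η, Nf (ξ + η) = Nf ξ + Nf η := fun ξ η =>
    tendsto_nhds_unique (hNf (ξ + η)) (by
      simpa [ContinuousLinearMap.add_apply] using (hNf ξ).add (hNf η))
  have hNsmul : ∀ (c : ℂ) ξ, Nf (c • ξ) = c * Nf ξ := fun c ξ =>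
    tendsto_nhds_unique (hNf (c • ξ)) (by
      simpa [ContinuousLinearMap.smul_apply, smul_eq_mul] using (hNf ξ).const_mul c)
  have hNbound : ∀ ξ, ‖Nf ξ‖ ≤ (C * C) * ‖ξ‖ := fun ξ =>
    le_of_tendsto (hNf ξ).norm (Filter.Eventually.of_forall fun i =>
      (hwbound ξ i).trans_eq (mul_comm _ _))
  set N : StrongDual ℂ (StrongDual ℂ X) := LinearMap.mkContinuous
    { toFun := Nf, map_add' := hNadd,
      map_smul' := fun c ξ => by simpa using hNsmul c ξ } (C * C) hNbound with hNdef
  have hNapp : ∀ ξ, N ξ = Nf ξ := fun ξ => rfl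
  obtain ⟨pre, hpre, hpre_norm⟩ : ∃ pre : (X →L[ℂ] X) → (StrongDual ℂ X →L[ℂ] StrongDual ℂ X),
      (∀ T ξ, pre T ξ = ξ.comp T) ∧ (∀ T, ‖pre T‖ ≤ ‖T‖) := by
    refine ⟨fun T => (ContinuousLinearMap.compL ℂ X X ℂ).flip T, fun T ξ => rfl, fun T => ?_⟩
    refine ContinuousLinearMap.opNorm_le_bound _ (norm_nonneg T) (fun ξ => ?_)
    exact (ContinuousLinearMap.opNorm_comp_le ξ T).trans (le_of_eq (mul_comm _ _))
  obtain ⟨Δs, hΔs⟩ : ∃ Δs : StrongDual ℂ A →L[ℂ] StrongDual ℂ X, ∀ f, Δs f = f.comp Δ :=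
    ⟨(ContinuousLinearMap.compL ℂ X A ℂ).flip Δ, fun f => rfl⟩
  set K : Submodule ℂ (StrongDual ℂ X) := (LinearMap.range (Δs : StrongDual ℂ A →ₗ[ℂ] StrongDual ℂ X)).topologicalClosure with hKdef
  haveI hKclosed : IsClosed (K : Set (StrongDual ℂ X)) := Submodule.isClosed_topologicalClosure _
  letI : NormedAddCommGroup (StrongDual ℂ X ⧸ K) := Submodule.Quotient.normedAddCommGroup K
  letI : NormedSpace ℂ (StrongDual ℂ X ⧸ K) := Submodule.Quotient.normedSpace K ℂ
  have hK_sub : ∀ f : StrongDual ℂ A, Δs f ∈ K := fun f =>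
    Submodule.le_topologicalClosure _ (LinearMap.mem_range_self _ f)
  have hKstable : ∀ (T : X →L[ℂ] X) (S : A →L[ℂ] A), Δ.comp T = S.comp Δ →
      ∀ ξ ∈ K, pre T ξ ∈ K := by
    intro T S hTS ξ hξ
    have hmaps : Set.MapsTo (pre T) (LinearMap.range (Δs : StrongDual ℂ A →ₗ[ℂ] StrongDual ℂ X) : Set (StrongDual ℂ X))
        (LinearMap.range (Δs : StrongDual ℂ A →ₗ[ℂ] StrongDual ℂ X) : Set (StrongDual ℂ X)) := by
      rintro η ⟨f, rfl⟩
      refine ⟨f.comp S, ?_⟩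
      rw [ContinuousLinearMap.coe_coe, hΔs, hΔs, hpre]
      ext x
      simp only [ContinuousLinearMap.comp_apply]
      rw [show Δ (T x) = S (Δ x) from DFunLike.congr_fun hTS x]
    have h2 := hmaps.closure (pre T).continuous
    have h3 : (K : Set (StrongDual ℂ X)) = closure (LinearMap.range (Δs : StrongDual ℂ A →ₗ[ℂ] StrongDual ℂ X) : Set (StrongDual ℂ X)) :=
      Submodule.topologicalClosure_coe _
    have h4 : pre T ξ ∈ closure (LinearMap.range (Δs : StrongDual ℂ A →ₗ[ℂ] StrongDual ℂ X) : Set (StrongDual ℂ X)) :=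
      h2 (by rw [← h3]; exact hξ)
    rw [← h3] at h4
    exact h4
  have hKr : ∀ a : A, ∀ ξ ∈ K, pre (r a) ξ ∈ K := fun a =>
    hKstable (r a) (ContinuousLinearMap.mul ℂ A a) (hΔr a)
  have hKl : ∀ a : A, ∀ ξ ∈ K, pre (l a) ξ ∈ K := fun a =>
    hKstable (l a) (ContinuousLinearMap.mul ℂ A a) (hΔl a)
  -- the quotient space
  obtain ⟨π, hπ, hπnorm⟩ : ∃ π : StrongDual ℂ X →L[ℂ] ((StrongDual ℂ X) ⧸ K),
      (∀ ξ, π ξ = Submodule.Quotient.mk ξ) ∧ ‖π‖ ≤ 1 := by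
    refine ⟨LinearMap.mkContinuous K.mkQ 1 (fun ξ => ?_), fun ξ => rfl, ?_⟩
    · rw [one_mul]
      exact Submodule.Quotient.norm_mk_le K ξ
    · exact LinearMap.mkContinuous_norm_le _ zero_le_one _
  have hπsurj : ∀ y : (StrongDual ℂ X) ⧸ K, ∃ ξ, π ξ = y := fun y => by
    obtain ⟨ξ, hξ⟩ := Submodule.Quotient.mk_surjective K y
    exact ⟨ξ, by rw [hπ]; exact hξ⟩
  have hπzero : ∀ ξ ∈ K, π ξ = 0 := fun ξ hξ => by
    rw [hπ, Submodule.Quotient.mk_eq_zero]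
    exact hξ
  -- quotient action construction
  have hqact : ∀ T : X →L[ℂ] X, (∀ ξ ∈ K, pre T ξ ∈ K) →
      ∃ Q : ((StrongDual ℂ X) ⧸ K) →L[ℂ] ((StrongDual ℂ X) ⧸ K),
        (∀ ξ, Q (π ξ) = π (ξ.comp T)) ∧ ‖Q‖ ≤ ‖T‖ := by
    intro T hT
    have hvan : ∀ ξ ∈ K, (π.comp (pre T)) ξ = 0 := fun ξ hξ => by
      simp only [ContinuousLinearMap.comp_apply]
      exact hπzero _ (hT ξ hξ)
    have hvan' : ∀ ξ ∈ K, (π.comp (pre T)) ξ = 0 := hvan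
    refine ⟨qlift K (π.comp (pre T)) hvan, fun ξ => ?_, ?_⟩
    · have h1 : π ξ = Submodule.Quotient.mk ξ := hπ ξ
      rw [h1, qlift_mk]
      simp only [ContinuousLinearMap.comp_apply, hpre]
    · refine (norm_qlift_le _ _ _).trans ?_
      calc ‖π.comp (pre T)‖ ≤ ‖π‖ * ‖pre T‖ := ContinuousLinearMap.opNorm_comp_le _ _
        _ ≤ 1 * ‖T‖ := mul_le_mul hπnorm (hpre_norm T) (norm_nonneg (pre T)) zero_le_one
        _ = ‖T‖ := one_mul _
  choose L0f hL0fapp hL0fnorm using fun a : A => hqact (r a) (hKr a)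
  choose R0f hR0fapp hR0fnorm using fun a : A => hqact (l a) (hKl a)
  have hL0fnorm' : ∀ a : A, ‖L0f a‖ ≤ ‖r‖ * ‖a‖ := fun a =>
    (hL0fnorm a).trans (r.le_opNorm a)
  have hR0fnorm' : ∀ a : A, ‖R0f a‖ ≤ ‖l‖ * ‖a‖ := fun a =>
    (hR0fnorm a).trans (l.le_opNorm a)
  -- bundle the quotient actions
  obtain ⟨L0, hL0⟩ : ∃ L0 : A →L[ℂ] ((StrongDual ℂ X ⧸ K) →L[ℂ] (StrongDual ℂ X ⧸ K)),
      ∀ a, L0 a = L0f a := by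
    refine ⟨LinearMap.mkContinuous
      { toFun := L0f
        map_add' := fun a b => by
          ext y
          obtain ⟨ξ, rfl⟩ := hπsurj y
          rw [ContinuousLinearMap.add_apply, hL0fapp, hL0fapp, hL0fapp, map_add r,
            ContinuousLinearMap.comp_add, map_add]
        map_smul' := fun c a => by
          ext y
          obtain ⟨ξ, rfl⟩ := hπsurj y
          rw [RingHom.id_apply, ContinuousLinearMap.smul_apply, hL0fapp, hL0fapp, map_smul r,
            ContinuousLinearMap.comp_smul, map_smul] } ‖r‖ hL0fnorm', fun a => rfl⟩
  obtain ⟨R0, hR0⟩ : ∃ R0 : A →L[ℂ] ((StrongDual ℂ X ⧸ K) →L[ℂ] (StrongDual ℂ X ⧸ K)),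
      ∀ a, R0 a = R0f a := by
    refine ⟨LinearMap.mkContinuous
      { toFun := R0f
        map_add' := fun a b => by
          ext y
          obtain ⟨ξ, rfl⟩ := hπsurj y
          rw [ContinuousLinearMap.add_apply, hR0fapp, hR0fapp, hR0fapp, map_add l,
            ContinuousLinearMap.comp_add, map_add]
        map_smul' := fun c a => by
          ext y
          obtain ⟨ξ, rfl⟩ := hπsurj y
          rw [RingHom.id_apply, ContinuousLinearMap.smul_apply, hR0fapp, hR0fapp, map_smul l,
            ContinuousLinearMap.comp_smul, map_smul] } ‖l‖ hR0fnorm', fun a => rfl⟩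
  -- the bimodule structure on the quotient
  have pf1 : ∀ (a b : A) (y : StrongDual ℂ X ⧸ K), L0 (a * b) y = L0 a (L0 b y) := by
    intro a b y
    obtain ⟨ξ, rfl⟩ := hπsurj y
    simp only [hL0]
    rw [hL0fapp b ξ, hL0fapp, hL0fapp, hrcomp,
      ← ContinuousLinearMap.comp_assoc]
  have pf2 : ∀ (a b : A) (y : StrongDual ℂ X ⧸ K), R0 (a * b) y = R0 b (R0 a y) := by
    intro a b y
    obtain ⟨ξ, rfl⟩ := hπsurj y
    simp only [hR0]
    rw [hR0fapp a ξ, hR0fapp, hR0fapp, hlcomp,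
      ← ContinuousLinearMap.comp_assoc]
  have pf3 : ∀ (a b : A) (y : StrongDual ℂ X ⧸ K), L0 a (R0 b y) = R0 b (L0 a y) := by
    intro a b y
    obtain ⟨ξ, rfl⟩ := hπsurj y
    simp only [hL0, hR0]
    rw [hR0fapp b ξ, hL0fapp a ξ, hL0fapp, hR0fapp,
      ContinuousLinearMap.comp_assoc, ContinuousLinearMap.comp_assoc, hlr]
  -- the derivation
  obtain ⟨D', hD'⟩ : ∃ D' : A →L[ℂ] StrongDual ℂ (StrongDual ℂ X),
      ∀ a ξ, D' a ξ = N (ξ.comp (l a)) - N (ξ.comp (r a)) := by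
    have happ : ∀ (a : A) (ξ : StrongDual ℂ X),
        (N.comp (pre (l a)) - N.comp (pre (r a))) ξ = N (ξ.comp (l a)) - N (ξ.comp (r a)) :=
      fun a ξ => by
        simp [ContinuousLinearMap.sub_apply, ContinuousLinearMap.comp_apply, hpre]
    refine ⟨LinearMap.mkContinuous
      { toFun := fun a => N.comp (pre (l a)) - N.comp (pre (r a))
        map_add' := fun a b => by
          ext ξ
          rw [ContinuousLinearMap.add_apply, happ, happ, happ, map_add l, map_add r,
            ContinuousLinearMap.comp_add, ContinuousLinearMap.comp_add, map_add, map_add]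
          ring
        map_smul' := fun c a => by
          ext ξ
          rw [RingHom.id_apply, ContinuousLinearMap.smul_apply, happ, happ, map_smul l,
            map_smul r, ContinuousLinearMap.comp_smul, ContinuousLinearMap.comp_smul,
            map_smul, map_smul]
          simp [smul_eq_mul]
          ring } (‖N‖ * ‖l‖ + ‖N‖ * ‖r‖) ?_, fun a ξ => happ a ξ⟩
    intro a
    have h1 : ‖N.comp (pre (l a))‖ ≤ ‖N‖ * ‖l a‖ :=
      (ContinuousLinearMap.opNorm_comp_le _ _).trans
        (mul_le_mul_of_nonneg_left (hpre_norm _) (norm_nonneg N))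
    have h2 : ‖N.comp (pre (r a))‖ ≤ ‖N‖ * ‖r a‖ :=
      (ContinuousLinearMap.opNorm_comp_le _ _).trans
        (mul_le_mul_of_nonneg_left (hpre_norm _) (norm_nonneg N))
    have h3 := norm_sub_le (N.comp (pre (l a))) (N.comp (pre (r a)))
    have h4 := l.le_opNorm a
    have h5 := r.le_opNorm a
    have h6 : (0:ℝ) ≤ ‖N‖ := norm_nonneg N
    simp only [LinearMap.coe_mk, AddHom.coe_mk]
    nlinarith [norm_nonneg (l a), norm_nonneg (r a), norm_nonneg a]
  have hD'K : ∀ a : A, ∀ ξ ∈ K, D' a ξ = 0 := by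
    intro a ξ hξ
    have hran : ∀ η ∈ (LinearMap.range (Δs : StrongDual ℂ A →ₗ[ℂ] StrongDual ℂ X) : Set (StrongDual ℂ X)), D' a η = 0 := by
      rintro η ⟨f, rfl⟩
      rw [hD', ContinuousLinearMap.coe_coe, hΔs]
      have heq : (f.comp Δ).comp (l a) = (f.comp Δ).comp (r a) := by
        rw [ContinuousLinearMap.comp_assoc, ContinuousLinearMap.comp_assoc, hΔl, hΔr]
      rw [heq, sub_self]
    have hclosed2 : IsClosed {η : StrongDual ℂ X | D' a η = 0} :=
      isClosed_eq (D' a).continuous continuous_const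
    have hsub2 : closure (LinearMap.range (Δs : StrongDual ℂ A →ₗ[ℂ] StrongDual ℂ X) : Set (StrongDual ℂ X)) ⊆ {η : StrongDual ℂ X | D' a η = 0} :=
      closure_minimal hran hclosed2
    have h3 : (K : Set (StrongDual ℂ X)) = closure (LinearMap.range (Δs : StrongDual ℂ A →ₗ[ℂ] StrongDual ℂ X) : Set (StrongDual ℂ X)) :=
      Submodule.topologicalClosure_coe _
    exact hsub2 (by rw [← h3]; exact hξ)
  obtain ⟨D₀, hD₀⟩ : ∃ D₀ : A →L[ℂ] StrongDual ℂ (StrongDual ℂ X ⧸ K),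
      ∀ a ξ, D₀ a (π ξ) = D' a ξ := by
    refine ⟨LinearMap.mkContinuous
      { toFun := fun a => qlift K (D' a) (hD'K a)
        map_add' := fun a b => by
          ext y
          obtain ⟨ξ, rfl⟩ := hπsurj y
          rw [hπ]
          rw [ContinuousLinearMap.add_apply, qlift_mk, qlift_mk, qlift_mk, map_add]
          rfl
        map_smul' := fun c a => by
          ext y
          obtain ⟨ξ, rfl⟩ := hπsurj y
          rw [hπ]
          rw [RingHom.id_apply, ContinuousLinearMap.smul_apply, qlift_mk, qlift_mk, map_smul]
          rfl } ‖D'‖ ?_, fun a ξ => by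
      rw [hπ, LinearMap.mkContinuous_apply]
      simp only [LinearMap.coe_mk, AddHom.coe_mk]
      exact qlift_mk _ _ _ ξ⟩
    intro a
    simp only [LinearMap.coe_mk, AddHom.coe_mk]
    exact (norm_qlift_le _ _ _).trans (D'.le_opNorm a)
  have hder : ∀ (a b : A) (y : StrongDual ℂ X ⧸ K), D₀ (a * b) y = D₀ a (L0 b y) + D₀ b (R0 a y) := by
    intro a b y
    obtain ⟨ξ, rfl⟩ := hπsurj y
    rw [hL0, hR0, hL0fapp, hR0fapp, hD₀, hD₀, hD₀, hD', hD', hD']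
    have e1 : ξ.comp (l (a * b)) = (ξ.comp (l a)).comp (l b) := by
      rw [hlcomp, ← ContinuousLinearMap.comp_assoc]
    have e2 : ξ.comp (r (a * b)) = (ξ.comp (r b)).comp (r a) := by
      rw [hrcomp, ← ContinuousLinearMap.comp_assoc]
    have e3 : (ξ.comp (r b)).comp (l a) = (ξ.comp (l a)).comp (r b) := by
      rw [ContinuousLinearMap.comp_assoc, ContinuousLinearMap.comp_assoc, hlr]
    rw [e1, e2, e3]
    ring
  obtain ⟨Φ₀, hΦ₀⟩ := ham (StrongDual ℂ X ⧸ K) ⟨L0, R0, pf1, pf2, pf3⟩ D₀ hder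
  have hΦ₀' : ∀ (a : A) (y : StrongDual ℂ X ⧸ K), D₀ a y = Φ₀ (R0 a y) - Φ₀ (L0 a y) := hΦ₀
  -- the virtual diagonal functional
  set Mf : StrongDual ℂ (StrongDual ℂ X) := N - Φ₀.comp π with hMfdef
  have hMfapp : ∀ ξ, Mf ξ = N ξ - Φ₀ (π ξ) := fun ξ => by
    rw [hMfdef]
    simp [ContinuousLinearMap.sub_apply, ContinuousLinearMap.comp_apply]
  have hMflip : ∀ (a : A) (ξ : StrongDual ℂ X), Mf (ξ.comp (l a)) = Mf (ξ.comp (r a)) := by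
    intro a ξ
    have h1 := hΦ₀' a (π ξ)
    rw [hL0, hR0, hL0fapp, hR0fapp, hD₀, hD'] at h1
    rw [hMfapp, hMfapp]
    linear_combination h1
  have hMone : ∀ φ : characterSpace ℂ A,
      Mf ((WeakDual.CharacterSpace.toCLM φ).comp Δ) = 1 := by
    intro φ
    have hK0 : Φ₀ (π ((WeakDual.CharacterSpace.toCLM φ).comp Δ)) = 0 := by
      rw [← hΔs, hπzero _ (hK_sub _), map_zero]
    have htend1 : Tendsto (fun i => φ (e i)) (U : Filter ι) (𝓝 1) := by
      have h1 : Tendsto (fun i => e i * u φ) F (𝓝 (u φ)) := (hlim (u φ)).1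
      have h2 : Tendsto (fun i => (WeakDual.CharacterSpace.toCLM φ) (e i * u φ)) F
          (𝓝 ((WeakDual.CharacterSpace.toCLM φ) (u φ))) :=
        ((WeakDual.CharacterSpace.toCLM φ).continuous.tendsto _).comp h1
      have h3 : Tendsto (fun i => φ (e i)) F (𝓝 1) := by
        simpa [WeakDual.CharacterSpace.coe_toCLM, map_mul, hu1 φ] using h2
      exact h3.mono_left hU
    have hN1 : N ((WeakDual.CharacterSpace.toCLM φ).comp Δ) = 1 := by
      have hval : ∀ i, ((WeakDual.CharacterSpace.toCLM φ).comp Δ) (t (e i) (e i))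
          = φ (e i) * φ (e i) := fun i => by
        simp [ContinuousLinearMap.comp_apply, hΔ, map_mul]
      have htendsq : Tendsto (fun i => ((WeakDual.CharacterSpace.toCLM φ).comp Δ)
          (t (e i) (e i))) (U : Filter ι) (𝓝 1) := by
        have := htend1.mul htend1
        rw [one_mul] at this
        simpa [hval] using this
      exact tendsto_nhds_unique (by rw [hNapp]; exact hNf _) htendsq
    rw [hMfapp, hN1, hK0, sub_zero]
  -- the representing operator R : A → X**
  obtain ⟨R, hR⟩ : ∃ R : A →L[ℂ] StrongDual ℂ (StrongDual ℂ X),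
      ∀ a ξ, R a ξ = Mf (ξ.comp (l a)) := by
    have happ : ∀ (a : A) (ξ : StrongDual ℂ X), (Mf.comp (pre (l a))) ξ = Mf (ξ.comp (l a)) :=
      fun a ξ => by simp [ContinuousLinearMap.comp_apply, hpre]
    refine ⟨LinearMap.mkContinuous
      { toFun := fun a => Mf.comp (pre (l a))
        map_add' := fun a b => by
          ext ξ
          rw [ContinuousLinearMap.add_apply, happ, happ, happ, map_add l,
            ContinuousLinearMap.comp_add, map_add]
        map_smul' := fun c a => by
          ext ξ
          rw [RingHom.id_apply, ContinuousLinearMap.smul_apply, happ, happ, map_smul l,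
            ContinuousLinearMap.comp_smul, map_smul] } (‖Mf‖ * ‖l‖) ?_,
      fun a ξ => happ a ξ⟩
    intro a
    simp only [LinearMap.coe_mk, AddHom.coe_mk]
    have h1 : ‖Mf.comp (pre (l a))‖ ≤ ‖Mf‖ * ‖l a‖ :=
      (ContinuousLinearMap.opNorm_comp_le _ _).trans
        (mul_le_mul_of_nonneg_left (hpre_norm _) (norm_nonneg Mf))
    refine h1.trans ?_
    rw [mul_assoc]
    exact mul_le_mul_of_nonneg_left (l.le_opNorm a) (norm_nonneg Mf)
  -- the double dual embedding
  have hιnorm : ∀ x : X, ‖inclusionInDoubleDual ℂ X x‖ = ‖x‖ := fun x =>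
    (inclusionInDoubleDualLi ℂ (E := X)).norm_map x
  have hιinj : Function.Injective (inclusionInDoubleDual ℂ X) := by
    intro x y h
    have h1 : inclusionInDoubleDual ℂ X (x - y) = 0 := by rw [map_sub, h, sub_self]
    have h2 : ‖x - y‖ = 0 := by rw [← hιnorm, h1, norm_zero]
    exact sub_eq_zero.mp (norm_eq_zero.mp h2)
  have hιclosed : IsClosed (Set.range (inclusionInDoubleDual ℂ X)) := by
    have hiso : Isometry (inclusionInDoubleDual ℂ X) :=
      AddMonoidHomClass.isometry_of_norm _ hιnorm
    exact hiso.isClosedEmbedding.isClosed_range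
  -- R(u φ) is the image of the elementary tensor
  have hRu : ∀ φ : characterSpace ℂ A,
      R (u φ) = inclusionInDoubleDual ℂ X (t (u φ) (u φ)) := by
    intro φ
    ext ξ
    rw [hR, NormedSpace.dual_def]
    have hl2 : l (u φ) = (l (u φ)).comp (l (u φ)) := by rw [← hlcomp, hu_sq]
    have e2 : (ξ.comp (l (u φ))).comp (r (u φ)) =
        ξ (t (u φ) (u φ)) • ((WeakDual.CharacterSpace.toCLM φ).comp Δ) := by
      refine st4_tensor_ext t ht _ _ (fun x y => ?_)
      have hx : u φ * x = φ x • u φ := hu_mul φ x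
      have hy : y * u φ = φ y • u φ := by rw [mul_comm]; exact hu_mul φ y
      rw [ContinuousLinearMap.comp_apply, ContinuousLinearMap.comp_apply, hrt, hlt, hx, hy]
      rw [ContinuousLinearMap.smul_apply, ContinuousLinearMap.comp_apply, hΔ]
      simp only [map_smul, ContinuousLinearMap.smul_apply, smul_eq_mul,
        WeakDual.CharacterSpace.coe_toCLM, map_mul]
      ring
    calc Mf (ξ.comp (l (u φ)))
        = Mf ((ξ.comp (l (u φ))).comp (l (u φ))) := by
          conv_lhs => rw [hl2, ← ContinuousLinearMap.comp_assoc]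
      _ = Mf ((ξ.comp (l (u φ))).comp (r (u φ))) := hMflip (u φ) (ξ.comp (l (u φ)))
      _ = ξ (t (u φ) (u φ)) * Mf ((WeakDual.CharacterSpace.toCLM φ).comp Δ) := by
          rw [e2, map_smul, smul_eq_mul]
      _ = ξ (t (u φ) (u φ)) := by rw [hMone, mul_one]
  -- R lands in the image of X
  have hRrange : ∀ a : A, R a ∈ Set.range (inclusionInDoubleDual ℂ X) := by
    have hsub : {a : A | {ψ : characterSpace ℂ A | ψ a ≠ 0}.Finite} ⊆
        {a : A | R a ∈ Set.range (inclusionInDoubleDual ℂ X)} := by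
      intro b hb
      refine ⟨∑ φ ∈ hb.toFinset, φ b • t (u φ) (u φ), ?_⟩
      rw [map_sum]
      conv_rhs => rw [hdecomp b hb]
      rw [map_sum]
      refine Finset.sum_congr rfl (fun φ _ => ?_)
      rw [map_smul, map_smul, hRu]
    have hclosedpre : IsClosed {a : A | R a ∈ Set.range (inclusionInDoubleDual ℂ X)} :=
      hιclosed.preimage R.continuous
    intro a
    have h1 := closure_minimal hsub hclosedpre
    rw [hT'dense.closure_eq] at h1
    exact h1 (Set.mem_univ a)
  choose σ hσ using fun a => hRrange a
  -- the right inverse ρ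
  obtain ⟨ρ, hρ⟩ : ∃ ρ : A →L[ℂ] X, ∀ a, ρ a = σ a := by
    refine ⟨LinearMap.mkContinuous
      { toFun := σ
        map_add' := fun a b => by
          apply hιinj
          rw [map_add, hσ, hσ, hσ, map_add]
        map_smul' := fun c a => by
          apply hιinj
          rw [RingHom.id_apply, map_smul, hσ, hσ, map_smul] } ‖R‖ ?_, fun a => rfl⟩
    intro a
    simp only [LinearMap.coe_mk, AddHom.coe_mk]
    rw [← hιnorm (σ a), hσ]
    exact R.le_opNorm a
  have hρι : ∀ a, inclusionInDoubleDual ℂ X (ρ a) = R a := fun a => by rw [hρ]; exact hσ a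
  have hρu : ∀ φ : characterSpace ℂ A, ρ (u φ) = t (u φ) (u φ) := fun φ =>
    hιinj (by rw [hρι, hRu])
  -- density extension helper
  have hdext : ∀ (f g : A → X), Continuous f → Continuous g →
      (∀ b ∈ {a : A | {ψ : characterSpace ℂ A | ψ a ≠ 0}.Finite}, f b = g b) →
      ∀ b, f b = g b := by
    intro f g hf hg h b
    have h1 := Set.EqOn.closure (fun x hx => h x hx) hf hg
    exact h1 (by rw [hT'dense.closure_eq]; trivial)
  refine ⟨ρ, ?_, ?_, ?_⟩
  · -- Δ ∘ ρ = id
    have hdA : ∀ (f g : A → A), Continuous f → Continuous g →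
        (∀ b ∈ {a : A | {ψ : characterSpace ℂ A | ψ a ≠ 0}.Finite}, f b = g b) →
        ∀ b, f b = g b := by
      intro f g hf hg h b
      have h1 := Set.EqOn.closure (fun x hx => h x hx) hf hg
      exact h1 (by rw [hT'dense.closure_eq]; trivial)
    refine hdA (fun b => Δ (ρ b)) (fun b => b) (Δ.continuous.comp ρ.continuous)
      continuous_id (fun b hb => ?_)
    have hb' := hdecomp b hb
    calc Δ (ρ b) = Δ (ρ (∑ φ ∈ hb.toFinset, φ b • u φ)) := by rw [← hb']
      _ = ∑ φ ∈ hb.toFinset, φ b • Δ (ρ (u φ)) := by simp only [map_sum, map_smul]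
      _ = ∑ φ ∈ hb.toFinset, φ b • u φ := by
          refine Finset.sum_congr rfl (fun φ _ => ?_)
          rw [hρu, hΔ, hu_sq]
      _ = b := hb'.symm
  · -- left module property
    have key : ∀ φ ψ : characterSpace ℂ A, ρ (u φ * u ψ) = l (u φ) (ρ (u ψ)) := by
      intro φ ψ
      by_cases h : φ = ψ
      · subst h
        rw [hu_sq, hρu, hlt, hu_sq]
      · rw [hu_orth φ ψ h, map_zero, hρu, hlt, hu_orth φ ψ h]
        rw [show (t (0 : A)) (u ψ) = 0 by rw [map_zero t]; rfl]
    have key2 : ∀ (φ : characterSpace ℂ A) (b : A), ρ (u φ * b) = l (u φ) (ρ b) := by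
      intro φ
      refine hdext (fun b => ρ (u φ * b)) (fun b => l (u φ) (ρ b))
        (ρ.continuous.comp (continuous_mul_left _))
        ((l (u φ)).continuous.comp ρ.continuous) (fun b hb => ?_)
      have hb' := hdecomp b hb
      calc ρ (u φ * b) = ρ (u φ * ∑ ψ ∈ hb.toFinset, ψ b • u ψ) := by rw [← hb']
        _ = ∑ ψ ∈ hb.toFinset, ψ b • ρ (u φ * u ψ) := by
            rw [Finset.mul_sum]
            simp only [map_sum, mul_smul_comm, map_smul]
        _ = ∑ ψ ∈ hb.toFinset, ψ b • l (u φ) (ρ (u ψ)) := by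
            refine Finset.sum_congr rfl (fun ψ _ => ?_)
            rw [key]
        _ = l (u φ) (ρ (∑ ψ ∈ hb.toFinset, ψ b • u ψ)) := by
            simp only [map_sum, map_smul]
        _ = l (u φ) (ρ b) := by rw [← hb']
    intro a b
    refine hdext (fun a' => ρ (a' * b)) (fun a' => l a' (ρ b))
      (ρ.continuous.comp (continuous_mul_right _))
      ((l.flip (ρ b)).continuous) (fun a' ha' => ?_) a
    have ha'' := hdecomp a' ha'
    calc ρ (a' * b) = ρ ((∑ φ ∈ ha'.toFinset, φ a' • u φ) * b) := by rw [← ha'']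
      _ = ∑ φ ∈ ha'.toFinset, φ a' • ρ (u φ * b) := by
          rw [Finset.sum_mul]
          simp only [map_sum, smul_mul_assoc, map_smul]
      _ = ∑ φ ∈ ha'.toFinset, φ a' • l (u φ) (ρ b) := by
          refine Finset.sum_congr rfl (fun φ _ => ?_)
          rw [key2]
      _ = l a' (ρ b) := by
          conv_rhs => rw [ha'']
          rw [map_sum]
          simp only [ContinuousLinearMap.sum_apply, map_smul,
            ContinuousLinearMap.smul_apply]
  · -- right module property
    have key : ∀ φ ψ : characterSpace ℂ A, ρ (u φ * u ψ) = r (u ψ) (ρ (u φ)) := by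
      intro φ ψ
      by_cases h : φ = ψ
      · subst h
        rw [hu_sq, hρu, hrt, hu_sq]
      · rw [hu_orth φ ψ h, map_zero, hρu, hrt, hu_orth φ ψ h, map_zero]
    have key2 : ∀ (ψ : characterSpace ℂ A) (a : A), ρ (a * u ψ) = r (u ψ) (ρ a) := by
      intro ψ
      refine hdext (fun a => ρ (a * u ψ)) (fun a => r (u ψ) (ρ a))
        (ρ.continuous.comp (continuous_mul_right _))
        ((r (u ψ)).continuous.comp ρ.continuous) (fun a ha => ?_)
      have ha' := hdecomp a ha
      calc ρ (a * u ψ) = ρ ((∑ φ ∈ ha.toFinset, φ a • u φ) * u ψ) := by rw [← ha']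
        _ = ∑ φ ∈ ha.toFinset, φ a • ρ (u φ * u ψ) := by
            rw [Finset.sum_mul]
            simp only [map_sum, smul_mul_assoc, map_smul]
        _ = ∑ φ ∈ ha.toFinset, φ a • r (u ψ) (ρ (u φ)) := by
            refine Finset.sum_congr rfl (fun φ _ => ?_)
            rw [key]
        _ = r (u ψ) (ρ (∑ φ ∈ ha.toFinset, φ a • u φ)) := by
            simp only [map_sum, map_smul]
        _ = r (u ψ) (ρ a) := by rw [← ha']
    intro a b
    refine hdext (fun b' => ρ (a * b')) (fun b' => r b' (ρ a))
      (ρ.continuous.comp (continuous_mul_left _))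
      ((r.flip (ρ a)).continuous) (fun b' hb' => ?_) b
    have hb'' := hdecomp b' hb'
    calc ρ (a * b') = ρ (a * ∑ ψ ∈ hb'.toFinset, ψ b' • u ψ) := by rw [← hb'']
      _ = ∑ ψ ∈ hb'.toFinset, ψ b' • ρ (a * u ψ) := by
          rw [Finset.mul_sum]
          simp only [map_sum, mul_smul_comm, map_smul]
      _ = ∑ ψ ∈ hb'.toFinset, ψ b' • r (u ψ) (ρ a) := by
          refine Finset.sum_congr rfl (fun ψ _ => ?_)
          rw [key2]
      _ = r b' (ρ a) := by
          conv_rhs => rw [hb'']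
          rw [map_sum]
          simp only [ContinuousLinearMap.sum_apply, map_smul,
            ContinuousLinearMap.smul_apply]
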